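/- Let i be an irrational real number with 0 < i < 1, let M = ([0, 5 + i/2] ∩ ℚ) ∪ (5 + i/2, ∞) regarded as an additive submonoid of the nonnegative reals, let F be a field, let R = F[X; M] be the monoid ring, let m be its maximal ideal of elements with zero constant term, and let D = R_m. Then D satisfies the PC condition: every proper ideal of D generated by two elements is contained in a proper principal ideal of D. -/

import Mathlib

open scoped Classical

/-- The "constant term" homomorphism of a monoid algebra `F[X; M]`, for a monoid `M` in
which `a + b = 0` forces `a = b = 0`; it sends `a₁X^{α₁} + ⋯ + aₙX^{αₙ}` to its
coefficient at the identity `0` of `M` (see `constantTermHom_apply`). -/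
noncomputable def constantTermHom (F M : Type*) [Field F] [AddCommMonoid M]
    (hM : ∀ a b : M, a + b = 0 → a = 0 ∧ b = 0) : AddMonoidAlgebra F M →ₐ[F] F :=
  AddMonoidAlgebra.lift F F M
    { toFun := fun a => if a.toAdd = 0 then 1 else 0
      map_one' := by simp
      map_mul' := fun a b => by
        rcases em (a.toAdd = 0) with ha | ha
        · rcases em (b.toAdd = 0) with hb | hb
          · simp [ha, hb]
          · have h : a.toAdd + b.toAdd ≠ 0 := fun h => hb (hM _ _ h).2
            simp [ha, hb, toAdd_mul, h]
        · have h : a.toAdd + b.toAdd ≠ 0 := fun h => ha (hM _ _ h).1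
          simp [ha, toAdd_mul, h] }

theorem constantTermHom_apply (F M : Type*) [Field F] [AddCommMonoid M]
    (hM : ∀ a b : M, a + b = 0 → a = 0 ∧ b = 0) (f : AddMonoidAlgebra F M) :
    constantTermHom F M hM f = f.coeff 0 := by
  classical
  rw [constantTermHom, AddMonoidAlgebra.lift_apply]
  simp only [MonoidHom.coe_mk, OneHom.coe_mk, toAdd_ofAdd, smul_eq_mul, mul_ite, mul_one,
    mul_zero]
  rw [Finsupp.sum_ite_eq' f.coeff 0 (fun _ b => b)]
  split
  · rfl
  · next h => exact (Finsupp.notMem_support_iff.mp h).symm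

/-- The augmentation ideal of the monoid algebra `F[X; M]`, consisting of all elements
with zero constant term (zero coefficient at the identity of `M`). -/
noncomputable def augIdeal (F M : Type*) [Field F] [AddCommMonoid M]
    (hM : ∀ a b : M, a + b = 0 → a = 0 ∧ b = 0) : Ideal (AddMonoidAlgebra F M) :=
  RingHom.ker (constantTermHom F M hM)

theorem mem_augIdeal_iff (F M : Type*) [Field F] [AddCommMonoid M]
    (hM : ∀ a b : M, a + b = 0 → a = 0 ∧ b = 0) (f : AddMonoidAlgebra F M) :
    f ∈ augIdeal F M hM ↔ f.coeff 0 = 0 := by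
  rw [augIdeal, RingHom.mem_ker, constantTermHom_apply]

/-- The augmentation ideal is a maximal ideal. -/
instance augIdeal_isMaximal (F M : Type*) [Field F] [AddCommMonoid M]
    {hM : ∀ a b : M, a + b = 0 → a = 0 ∧ b = 0} : (augIdeal F M hM).IsMaximal :=
  RingHom.ker_isMaximal_of_surjective _ (fun c =>
    ⟨AddMonoidAlgebra.single 0 c, by simp [constantTermHom]⟩)

/-- The set `M = ([0, 5 + i/2] ∩ ℚ) ∪ (5 + i/2, ∞)` of nonnegative reals. -/
def Mcarrier (i : ℝ) : Set ℝ :=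
  (Set.Icc (0 : ℝ) (5 + i / 2) ∩ Set.range ((↑) : ℚ → ℝ)) ∪ Set.Ioi (5 + i / 2)

theorem Mcarrier.nonneg {i : ℝ} (hi0 : 0 < i) {x : ℝ} (hx : x ∈ Mcarrier i) : 0 ≤ x := by
  rcases hx with ⟨⟨h1, _⟩, _⟩ | h
  · exact h1
  · have : (0 : ℝ) < 5 + i / 2 := by linarith
    exact le_of_lt (lt_trans this h)

theorem Mcarrier.add_mem {i : ℝ} (hi0 : 0 < i) {a b : ℝ}
    (ha : a ∈ Mcarrier i) (hb : b ∈ Mcarrier i) : a + b ∈ Mcarrier i := by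
  rcases ha with ⟨⟨ha1, ha2⟩, ⟨p, hp⟩⟩ | ha
  · rcases hb with ⟨⟨hb1, hb2⟩, ⟨s, hs⟩⟩ | hb
    · rcases lt_or_ge (5 + i / 2) (a + b) with h | h
      · exact Or.inr h
      · exact Or.inl ⟨⟨by linarith, h⟩, ⟨p + s, by push_cast [hp, hs]; ring⟩⟩
    · exact Or.inr (by simp only [Set.mem_Ioi] at hb ⊢; linarith)
  · have hb0 : 0 ≤ b := Mcarrier.nonneg hi0 hb
    exact Or.inr (by simp only [Set.mem_Ioi] at ha ⊢; linarith)

/-- `M` as an additive submonoid of the reals. -/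
def Msubmonoid (i : ℝ) (hi0 : 0 < i) : AddSubmonoid ℝ where
  carrier := Mcarrier i
  zero_mem' := Or.inl ⟨⟨le_refl 0, by linarith⟩, ⟨0, by norm_num⟩⟩
  add_mem' := fun ha hb => Mcarrier.add_mem hi0 ha hb

theorem Msubmonoid_pos_monoid (i : ℝ) (hi0 : 0 < i) :
    ∀ a b : Msubmonoid i hi0, a + b = 0 → a = 0 ∧ b = 0 := fun a b h => by
  have hs : (a : ℝ) + (b : ℝ) = 0 := by
    have := congrArg Subtype.val h
    push_cast at this
    exact this
  have ha := Mcarrier.nonneg hi0 a.2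
  have hb := Mcarrier.nonneg hi0 b.2
  refine ⟨Subtype.ext ?_, Subtype.ext ?_⟩ <;>
    simp only [ZeroMemClass.coe_zero] <;> linarith

/-- If every exponent in the support of `f` is `γ` plus an element of `M`, then the
monomial `X^γ` divides `f`. -/
theorem single_dvd_of_support {F M : Type*} [Field F] [AddCommMonoid M]
    (f : AddMonoidAlgebra F M) (γ : M) (h : ∀ δ ∈ f.coeff.support, ∃ δ' : M, γ + δ' = δ) :
    (AddMonoidAlgebra.single γ (1 : F)) ∣ f := by
  classical
  conv_rhs => rw [← AddMonoidAlgebra.sum_coeff_single f, Finsupp.sum]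
  refine Finset.dvd_sum fun δ hδ => ?_
  obtain ⟨δ', hδ'⟩ := h δ hδ
  exact ⟨AddMonoidAlgebra.single δ' (f.coeff δ), by
    rw [AddMonoidAlgebra.single_mul_single, one_mul, hδ']⟩

/-- Let `i` be an irrational real with `0 < i < 1`, let
`M = ([0, 5 + i/2] ∩ ℚ) ∪ (5 + i/2, ∞)` as an additive submonoid of the nonnegative
reals, let `F` be a field, `R = F[X; M]` the monoid ring, `m` its maximal ideal of
elements with zero constant term, and `D = R_m`. Then `D` satisfies the PC condition:
every proper two-generated ideal of `D` is contained in a proper principal ideal. -/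
theorem localization_monoidAlgebra_M_pc (i : ℝ) (hi : Irrational i) (hi0 : 0 < i)
    (hi1 : i < 1) (F : Type*) [Field F] :
    ∀ a b : Localization.AtPrime (augIdeal F (Msubmonoid i hi0) (Msubmonoid_pos_monoid i hi0)),
      Ideal.span {a, b} ≠ ⊤ →
      ∃ c, Ideal.span {a, b} ≤ Ideal.span {c} ∧
        Ideal.span ({c} : Set (Localization.AtPrime
          (augIdeal F (Msubmonoid i hi0) (Msubmonoid_pos_monoid i hi0)))) ≠ ⊤ := by
  classical
  set p := augIdeal F (Msubmonoid i hi0) (Msubmonoid_pos_monoid i hi0) with hpdef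
  set D := Localization.AtPrime p with hDdef
  intro a b hab
  -- both generators lie in the maximal ideal of the local ring `D`
  have hle : Ideal.span {a, b} ≤ IsLocalRing.maximalIdeal D := IsLocalRing.le_maximalIdeal hab
  have ha : a ∈ IsLocalRing.maximalIdeal D := hle (Ideal.subset_span (by simp))
  have hb : b ∈ IsLocalRing.maximalIdeal D := hle (Ideal.subset_span (by simp))
  obtain ⟨⟨f, s⟩, rfl⟩ := IsLocalization.mk'_surjective p.primeCompl a
  obtain ⟨⟨g, t⟩, rfl⟩ := IsLocalization.mk'_surjective p.primeCompl b
  -- the numerators lie in the augmentation ideal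
  have hmem : ∀ (h : AddMonoidAlgebra F (Msubmonoid i hi0)) (u : p.primeCompl),
      IsLocalization.mk' D h u ∈ IsLocalRing.maximalIdeal D → h ∈ p := by
    intro h u hu
    rw [← Localization.AtPrime.comap_maximalIdeal (I := p), Ideal.mem_comap,
      ← IsLocalization.mk'_spec D h u]
    exact Ideal.mul_mem_right _ _ hu
  have hfp : f ∈ p := hmem f s ha
  have hgp : g ∈ p := hmem g t hb
  have hf0 : f.coeff 0 = 0 := (mem_augIdeal_iff _ _ _ f).mp hfp
  have hg0 : g.coeff 0 = 0 := (mem_augIdeal_iff _ _ _ g).mp hgp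
  -- choose a small positive rational exponent γ
  set T := f.coeff.support ∪ g.coeff.support with hT
  have hTpos : ∀ δ ∈ T, (0 : ℝ) < (δ : Msubmonoid i hi0).1 := by
    intro δ hδ
    have hδ0 : δ ≠ 0 := by
      rintro rfl
      rcases Finset.mem_union.mp hδ with h | h
      · exact Finsupp.mem_support_iff.mp h hf0
      · exact Finsupp.mem_support_iff.mp h hg0
    have h1 : (0 : ℝ) ≤ δ.1 := Mcarrier.nonneg hi0 δ.2
    rcases h1.lt_or_eq with h | h
    · exact h
    · exact absurd (Subtype.ext h.symm) hδ0
  set bound : Msubmonoid i hi0 → ℝ :=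
    fun δ => if (δ : ℝ) ≤ 5 + i / 2 then (δ : ℝ) else (δ : ℝ) - (5 + i / 2) with hbound
  set B : Finset ℝ := insert (1 : ℝ) (T.image bound) with hB
  have hBne : B.Nonempty := ⟨1, Finset.mem_insert_self _ _⟩
  set ε : ℝ := B.min' hBne with hε
  have hεpos : 0 < ε := by
    refine (B.lt_min'_iff hBne).mpr ?_
    intro y hy
    rcases Finset.mem_insert.mp hy with rfl | hy
    · norm_num
    · obtain ⟨δ, hδ, rfl⟩ := Finset.mem_image.mp hy
      by_cases hc : (δ : ℝ) ≤ 5 + i / 2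
      · simpa [hbound, hc] using hTpos δ hδ
      · push_neg at hc
        simp only [hbound, if_neg (not_le.mpr hc)]
        linarith
  have hε1 : ε ≤ 1 := Finset.min'_le _ _ (Finset.mem_insert_self _ _)
  have hεb : ∀ δ ∈ T, ε ≤ bound δ := fun δ hδ =>
    Finset.min'_le _ _ (Finset.mem_insert_of_mem (Finset.mem_image_of_mem _ hδ))
  obtain ⟨q, hq0, hqε⟩ := exists_rat_btwn hεpos
  have hq0' : (0 : ℝ) < (q : ℝ) := hq0
  have hq52 : (q : ℝ) ≤ 5 + i / 2 := by linarith
  set γ : Msubmonoid i hi0 :=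
    ⟨(q : ℝ), Or.inl ⟨⟨le_of_lt hq0', hq52⟩, ⟨q, rfl⟩⟩⟩ with hγ
  have hγ0 : γ ≠ 0 := by
    intro h
    have := congrArg (fun x : Msubmonoid i hi0 => (x : ℝ)) h
    simp only [ZeroMemClass.coe_zero] at this
    exact absurd this hq0'.ne'
  -- γ plus something in M gives every exponent in T
  have hkey : ∀ δ ∈ T, ∃ δ' : Msubmonoid i hi0, γ + δ' = δ := by
    intro δ hδ
    have hqb : (q : ℝ) < bound δ := lt_of_lt_of_le hqε (hεb δ hδ)
    by_cases hc : (δ : ℝ) ≤ 5 + i / 2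
    · -- δ is rational
      have hrat : ∃ r : ℚ, (r : ℝ) = (δ : ℝ) := by
        rcases δ.2 with ⟨⟨_, _⟩, ⟨r, hr⟩⟩ | hIoi
        · exact ⟨r, hr⟩
        · exact absurd hIoi (by simpa [Set.mem_Ioi] using not_lt.mpr hc)
      obtain ⟨r, hr⟩ := hrat
      have hqδ : (q : ℝ) < (δ : ℝ) := by simpa [hbound, hc] using hqb
      refine ⟨⟨(δ : ℝ) - q, Or.inl ⟨⟨by linarith, by linarith⟩,
        ⟨r - q, by push_cast; rw [hr]⟩⟩⟩, ?_⟩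
      exact Subtype.ext (by simp [hγ])
    · push_neg at hc
      have hqδ : (q : ℝ) < (δ : ℝ) - (5 + i / 2) := by
        simpa [hbound, not_le.mpr hc] using hqb
      refine ⟨⟨(δ : ℝ) - q, Or.inr (by simp only [Set.mem_Ioi]; linarith)⟩, ?_⟩
      exact Subtype.ext (by simp [hγ])
  -- the monomial X^γ divides both numerators
  have hdf : AddMonoidAlgebra.single γ (1 : F) ∣ f :=
    single_dvd_of_support f γ fun δ hδ => hkey δ (Finset.mem_union_left _ hδ)
  have hdg : AddMonoidAlgebra.single γ (1 : F) ∣ g :=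
    single_dvd_of_support g γ fun δ hδ => hkey δ (Finset.mem_union_right _ hδ)
  set c : D := algebraMap (AddMonoidAlgebra F (Msubmonoid i hi0)) D
    (AddMonoidAlgebra.single γ (1 : F)) with hc
  have hdvd : ∀ (h : AddMonoidAlgebra F (Msubmonoid i hi0)) (u : p.primeCompl),
      AddMonoidAlgebra.single γ (1 : F) ∣ h → c ∣ IsLocalization.mk' D h u := by
    intro h u hd
    rw [IsLocalization.mk'_eq_mul_mk'_one]
    exact Dvd.dvd.mul_right (map_dvd _ hd) _
  refine ⟨c, ?_, ?_⟩
  · rw [Ideal.span_le]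
    rintro x (rfl | rfl)
    · exact Ideal.mem_span_singleton.mpr (hdvd f s hdf)
    · exact Ideal.mem_span_singleton.mpr (hdvd g t hdg)
  · -- c lies in the maximal ideal, so (c) is proper
    have hcp : AddMonoidAlgebra.single γ (1 : F) ∈ p := by
      rw [mem_augIdeal_iff]
      simp [AddMonoidAlgebra.coeff_single, Finsupp.single_apply, hγ0]
    have hcm : c ∈ IsLocalRing.maximalIdeal D := by
      rw [hc, ← Ideal.mem_comap]
      exact (Localization.AtPrime.comap_maximalIdeal (I := p)).ge hcp
    intro htop
    exact (IsLocalRing.maximalIdeal.isMaximal D).ne_top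
      (top_le_iff.mp (htop ▸ (Ideal.span_le.mpr (Set.singleton_subset_iff.mpr hcm))))
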